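/- arXiv:2511.19069 — 3 statements merged into one kernel-verified Lean document; each statement's English description precedes it below -/
import Mathlib

section
/- Let T be a unital triangular algebra, n > 1 an integer, and Ψ, Ω : T → T linear maps satisfying 2Ψ(X^n) = X^(n-1)·Ω(X) + Ω(X)·X^(n-1) for all X ∈ T. If Ω(1) ∈ Z(T), then Ψ and Ω are two-sided generalized derivations on T. Explicitly, setting Δ(X) = Ω(X) − Ω(1)X, the map Δ is a derivation and Ω(XY) = Ω(X)Y + XΔ(Y) = Δ(X)Y + XΩ(Y) for all X, Y, and similarly Ψ(X) = Δ(X)/n + Ω(1)X is a two-sided generalized derivation. -/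
set_option linter.unusedSectionVars false

/-- The triangular algebra `Tri A M B`: formal upper triangular matrices
`[a m; 0 b]` with `a ∈ A`, `m ∈ M`, `b ∈ B`, where `M` is an `(A,B)`-bimodule
(the right `B`-action is encoded as a `Bᵐᵒᵖ`-action). -/
structure Tri (A M B : Type*) where
  a : A
  m : M
  b : B

namespace Tri

variable {A M B : Type*} [Ring A] [Ring B] [AddCommGroup M]
  [Module A M] [Module Bᵐᵒᵖ M] [SMulCommClass A Bᵐᵒᵖ M]

@[ext] theorem ext' {x y : Tri A M B} (ha : x.a = y.a) (hm : x.m = y.m)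
    (hb : x.b = y.b) : x = y := by
  cases x; cases y; simp_all

instance : Add (Tri A M B) := ⟨fun x y => ⟨x.a + y.a, x.m + y.m, x.b + y.b⟩⟩
instance : Zero (Tri A M B) := ⟨⟨0, 0, 0⟩⟩
instance : Neg (Tri A M B) := ⟨fun x => ⟨-x.a, -x.m, -x.b⟩⟩
instance : One (Tri A M B) := ⟨⟨1, 0, 1⟩⟩
instance : Mul (Tri A M B) :=
  ⟨fun x y => ⟨x.a * y.a, x.a • y.m + MulOpposite.op y.b • x.m, x.b * y.b⟩⟩

@[simp] lemma add_a (x y : Tri A M B) : (x + y).a = x.a + y.a := rfl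
@[simp] lemma add_m (x y : Tri A M B) : (x + y).m = x.m + y.m := rfl
@[simp] lemma add_b (x y : Tri A M B) : (x + y).b = x.b + y.b := rfl
@[simp] lemma zero_a : (0 : Tri A M B).a = 0 := rfl
@[simp] lemma zero_m : (0 : Tri A M B).m = 0 := rfl
@[simp] lemma zero_b : (0 : Tri A M B).b = 0 := rfl
@[simp] lemma neg_a (x : Tri A M B) : (-x).a = -x.a := rfl
@[simp] lemma neg_m (x : Tri A M B) : (-x).m = -x.m := rfl
@[simp] lemma neg_b (x : Tri A M B) : (-x).b = -x.b := rfl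
@[simp] lemma one_a : (1 : Tri A M B).a = 1 := rfl
@[simp] lemma one_m : (1 : Tri A M B).m = 0 := rfl
@[simp] lemma one_b : (1 : Tri A M B).b = 1 := rfl
@[simp] lemma mul_a (x y : Tri A M B) : (x * y).a = x.a * y.a := rfl
@[simp] lemma mul_m (x y : Tri A M B) :
    (x * y).m = x.a • y.m + MulOpposite.op y.b • x.m := rfl
@[simp] lemma mul_b (x y : Tri A M B) : (x * y).b = x.b * y.b := rfl

instance instRing : Ring (Tri A M B) where
  nsmul := nsmulRec
  zsmul := zsmulRec
  add_assoc := by intros; ext <;> simp [add_assoc]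
  zero_add := by intros; ext <;> simp
  add_zero := by intros; ext <;> simp
  add_comm := by intros; ext <;> simp [add_comm]
  neg_add_cancel := by intros; ext <;> simp
  mul_assoc := by
    intros x y z
    ext
    · simp [mul_assoc]
    · simp [mul_smul, smul_add, smul_comm, add_assoc]
    · simp [mul_assoc]
  one_mul := by intros; ext <;> simp
  mul_one := by intros; ext <;> simp
  left_distrib := by
    intros x y z
    ext <;> simp [mul_add, smul_add, add_smul] <;> abel
  right_distrib := by
    intros x y z
    ext <;> simp [add_mul, add_smul, smul_add] <;> abel
  zero_mul := by intros; ext <;> simp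
  mul_zero := by intros; ext <;> simp


instance instSMul {S : Type*} [SMul S A] [SMul S M] [SMul S B] : SMul S (Tri A M B) :=
  ⟨fun c x => ⟨c • x.a, c • x.m, c • x.b⟩⟩

@[simp] lemma smul_a {S : Type*} [SMul S A] [SMul S M] [SMul S B] (c : S) (x : Tri A M B) :
    (c • x).a = c • x.a := rfl
@[simp] lemma smul_m {S : Type*} [SMul S A] [SMul S M] [SMul S B] (c : S) (x : Tri A M B) :
    (c • x).m = c • x.m := rfl
@[simp] lemma smul_b {S : Type*} [SMul S A] [SMul S M] [SMul S B] (c : S) (x : Tri A M B) :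
    (c • x).b = c • x.b := rfl

end Tri

section Aux

instance Tri.instModule {S A M B : Type*} [Semiring S] [Ring A] [Ring B] [AddCommGroup M]
    [Module S A] [Module S B] [Module S M]
    [Module A M] [Module Bᵐᵒᵖ M] [SMulCommClass A Bᵐᵒᵖ M] :
    Module S (Tri A M B) where
  one_smul x := by ext <;> simp
  mul_smul c d x := by ext <;> simp [mul_smul]
  smul_zero c := by ext <;> simp
  smul_add c x y := by ext <;> simp
  add_smul c d x := by ext <;> simp [add_smul]
  zero_smul x := by ext <;> simp

/-- coefficient extraction -/
theorem poly_vanish {V : Type*} [AddCommGroup V] [Module ℚ V] (N : ℕ) (c : ℕ → V)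
    (h : ∀ t : ℕ, ∑ k ∈ Finset.range N, ((t : ℚ)) ^ k • c k = 0) :
    ∀ k ∈ Finset.range N, c k = 0 := by
  intro k hk
  have : Module.Free ℚ V := Module.Free.of_divisionRing ℚ V
  let b := Module.Free.chooseBasis ℚ V
  rw [← (b.forall_coord_eq_zero_iff)]
  intro i
  set p : Polynomial ℚ := ∑ j ∈ Finset.range N, Polynomial.C (b.coord i (c j)) * Polynomial.X ^ j with hp
  have hev : ∀ t : ℕ, p.eval (t : ℚ) = 0 := by
    intro t
    have h2 := congrArg (b.coord i) (h t)
    simp only [map_sum, map_smul, map_zero, smul_eq_mul] at h2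
    rw [hp, Polynomial.eval_finset_sum]
    simp only [Polynomial.eval_mul, Polynomial.eval_C, Polynomial.eval_pow, Polynomial.eval_X]
    rw [← h2]
    exact Finset.sum_congr rfl fun j _ => mul_comm _ _
  have hp0 : p = 0 := by
    apply Polynomial.eq_zero_of_infinite_isRoot
    apply Set.infinite_of_injective_forall_mem (f := fun t : ℕ => (t : ℚ))
    · exact fun a b hab => Nat.cast_injective hab
    · intro t; exact hev t
  have h3 := congrArg (fun q => Polynomial.coeff q k) hp0
  simp only [hp, Polynomial.finset_sum_coeff, Polynomial.coeff_C_mul, Polynomial.coeff_X_pow,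
    Polynomial.coeff_zero, mul_ite, mul_one, mul_zero] at h3
  rwa [Finset.sum_ite_eq (Finset.range N) k fun j => b.coord i (c j), if_pos hk] at h3

end Aux

section Jordan

open MulOpposite in
theorem Tri.jordan_deriv {A M B : Type*} [Ring A] [Ring B] [AddCommGroup M]
    [Module A M] [Module Bᵐᵒᵖ M] [SMulCommClass A Bᵐᵒᵖ M]
    (hfA : ∀ a : A, (∀ m : M, a • m = 0) → a = 0)
    (hfB : ∀ b : B, (∀ m : M, MulOpposite.op b • m = 0) → b = 0)
    (d : Tri A M B →+ Tri A M B)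
    (htf : ∀ x : Tri A M B, x + x = 0 → x = 0)
    (hJ : ∀ x, d (x * x) = x * d x + d x * x) :
    ∀ x y, d (x * y) = d x * y + x * d y := by
  have hJ2 : ∀ x y, d (x * y + y * x) = d x * y + x * d y + d y * x + y * d x := by
    intro x y
    have e := hJ (x + y)
    rw [show (x + y) * (x + y) = x * x + (x * y + y * x) + y * y by noncomm_ring,
      map_add, map_add, hJ x, hJ y, map_add d x y] at e
    rw [← sub_eq_zero]
    have e' := sub_eq_zero_of_eq e
    rw [← e']
    simp only [mul_add, add_mul]
    abel
  set p : Tri A M B := ⟨1, 0, 0⟩ with hpdef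
  set m0 : M := (d p).m with hm0
  have hpp : p * p = p := by ext <;> simp [hpdef]
  have hdpa : (d p).a = 0 := by
    have e := congrArg Tri.a (hpp ▸ hJ p)
    simp only [add_a, mul_a, hpdef, one_mul, mul_one] at e
    rwa [left_eq_add] at e
  have hdpb : (d p).b = 0 := by
    have e := congrArg Tri.b (hpp ▸ hJ p)
    simp only [add_b, mul_b, hpdef, zero_mul, mul_zero, add_zero] at e
    exact e
  have htfA : ∀ a : A, a + a = 0 → a = 0 := by
    intro a h
    have : (⟨a, 0, 0⟩ : Tri A M B) + ⟨a, 0, 0⟩ = 0 := by ext <;> simp [h]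
    exact congrArg Tri.a (htf _ this)
  have htfB : ∀ b : B, b + b = 0 → b = 0 := by
    intro b h
    have : (⟨0, 0, b⟩ : Tri A M B) + ⟨0, 0, b⟩ = 0 := by ext <;> simp [h]
    exact congrArg Tri.b (htf _ this)
  set ea : A → Tri A M B := fun a => ⟨a, 0, 0⟩ with headef
  set em : M → Tri A M B := fun m => ⟨0, m, 0⟩ with hemdef
  set eb : B → Tri A M B := fun b => ⟨0, 0, b⟩ with hebdef
  -- F1
  have F1b : ∀ a : A, (d (ea a)).b = 0 := by
    intro a
    have harg : ea a * p + p * ea a = ea a + ea a := by ext <;> simp [headef, hpdef]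
    have e := congrArg Tri.b ((hJ2 (ea a) p).symm.trans (congrArg d harg)).symm
    rw [map_add] at e
    simp only [add_b, mul_b, headef, hpdef, zero_mul, mul_zero, add_zero, zero_add] at e
    exact htfB _ e
  have F1m : ∀ a : A, (d (ea a)).m = a • m0 := by
    intro a
    have harg : ea a * p + p * ea a = ea a + ea a := by ext <;> simp [headef, hpdef]
    have e := congrArg Tri.m ((hJ2 (ea a) p).symm.trans (congrArg d harg)).symm
    rw [map_add] at e
    simp only [add_m, mul_m, headef, hpdef, smul_zero, zero_smul, add_zero, zero_add,
      MulOpposite.op_zero, one_smul, ← hm0] at e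
    -- e : (d (ea a)).m + (d (ea a)).m = a • m0 + (d (ea a)).m  (up to ordering)
    exact add_right_cancel e
  -- F2
  have F2a : ∀ m : M, (d (em m)).a = 0 := by
    intro m
    have harg : em m * p + p * em m = em m := by ext <;> simp [hemdef, hpdef]
    have e := congrArg Tri.a ((hJ2 (em m) p).symm.trans (congrArg d harg)).symm
    simp only [add_a, mul_a, hemdef, hpdef, zero_mul, mul_zero, one_mul, mul_one,
      add_zero, zero_add] at e
    rwa [left_eq_add] at e
  have F2b : ∀ m : M, (d (em m)).b = 0 := by
    intro m
    have harg : em m * p + p * em m = em m := by ext <;> simp [hemdef, hpdef]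
    have e := congrArg Tri.b ((hJ2 (em m) p).symm.trans (congrArg d harg)).symm
    simp only [add_b, mul_b, hemdef, hpdef, zero_mul, mul_zero, add_zero, zero_add] at e
    exact e
  -- F3
  have F3a : ∀ b : B, (d (eb b)).a = 0 := by
    intro b
    have harg : eb b * p + p * eb b = 0 := by ext <;> simp [hebdef, hpdef]
    have e := congrArg Tri.a ((hJ2 (eb b) p).symm.trans (congrArg d harg)).symm
    simp only [add_a, mul_a, hebdef, hpdef, zero_mul, mul_zero, one_mul, mul_one,
      add_zero, zero_add, map_zero, zero_a] at e
    exact htfA _ e.symm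
  have F3m : ∀ b : B, (d (eb b)).m = -(MulOpposite.op b • m0) := by
    intro b
    have harg : eb b * p + p * eb b = 0 := by ext <;> simp [hebdef, hpdef]
    have e := congrArg Tri.m ((hJ2 (eb b) p).symm.trans (congrArg d harg)).symm
    simp only [add_m, mul_m, hebdef, hpdef, smul_zero, zero_smul, add_zero, zero_add,
      MulOpposite.op_zero, one_smul, map_zero, zero_m, ← hm0] at e
    rw [eq_neg_iff_add_eq_zero, add_comm]
    exact e.symm
  -- R1
  have R1 : ∀ (a : A) (m : M), (d ⟨0, a • m, 0⟩).m
      = (d ⟨a, 0, 0⟩).a • m + a • (d ⟨0, m, 0⟩).m := by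
    intro a m
    have harg : (⟨a,0,0⟩ : Tri A M B) * ⟨0,m,0⟩ + ⟨0,m,0⟩ * ⟨a,0,0⟩ = ⟨0, a • m, 0⟩ := by
      ext <;> simp
    have e := congrArg Tri.m
      (((hJ2 (⟨a,0,0⟩ : Tri A M B) ⟨0,m,0⟩).symm.trans (congrArg d harg)).symm)
    simp only [add_m, mul_m, smul_zero, zero_smul, add_zero, zero_add,
      MulOpposite.op_zero, F1b, F2b, headef, hemdef] at e
    rw [show (d ⟨a, 0, 0⟩ : Tri A M B).b = 0 from F1b a, MulOpposite.op_zero, zero_smul,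
      add_zero] at e
    exact e
  -- R2
  have R2 : ∀ (b : B) (m : M), (d ⟨0, MulOpposite.op b • m, 0⟩).m
      = MulOpposite.op b • (d ⟨0, m, 0⟩).m + MulOpposite.op (d ⟨0, 0, b⟩).b • m := by
    intro b m
    have harg : (⟨0,0,b⟩ : Tri A M B) * ⟨0,m,0⟩ + ⟨0,m,0⟩ * ⟨0,0,b⟩
        = ⟨0, MulOpposite.op b • m, 0⟩ := by
      ext <;> simp
    have e := congrArg Tri.m
      (((hJ2 (⟨0,0,b⟩ : Tri A M B) ⟨0,m,0⟩).symm.trans (congrArg d harg)).symm)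
    simp only [add_m, mul_m, smul_zero, zero_smul, add_zero, zero_add,
      MulOpposite.op_zero, F2a, F3a, hebdef, hemdef] at e
    rw [show (d ⟨0, 0, b⟩ : Tri A M B).a = 0 from F3a b, zero_smul, zero_add] at e
    exact e
  -- f is a derivation on A
  have fd : ∀ a a' : A, (d ⟨a * a', 0, 0⟩).a
      = (d ⟨a, 0, 0⟩).a * a' + a * (d ⟨a', 0, 0⟩).a := by
    intro a a'
    rw [← sub_eq_zero]
    apply hfA
    intro m
    have h1 := R1 (a * a') m
    have h2 := R1 a (a' • m)
    have h3 := R1 a' m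
    rw [mul_smul] at h1
    rw [h3] at h2
    have e := h1.symm.trans h2
    have e' := sub_eq_zero_of_eq e
    rw [← sub_eq_zero]
    refine Eq.trans ?_ e'
    simp only [sub_smul, add_smul, smul_add, mul_smul]
    abel
  -- w is a derivation on B
  have wd : ∀ b b' : B, (d ⟨0, 0, b * b'⟩).b
      = (d ⟨0, 0, b⟩).b * b' + b * (d ⟨0, 0, b'⟩).b := by
    intro b b'
    rw [← sub_eq_zero]
    apply hfB
    intro m
    have h1 := R2 (b * b') m
    have h2 := R2 b' (MulOpposite.op b • m)
    have h3 := R2 b m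
    rw [show (MulOpposite.op (b * b') : Bᵐᵒᵖ) • m
        = MulOpposite.op b' • (MulOpposite.op b • m) by
      rw [MulOpposite.op_mul, mul_smul]] at h1
    rw [h3] at h2
    have e := h1.symm.trans h2
    have e' := sub_eq_zero_of_eq e
    rw [← sub_eq_zero]
    refine Eq.trans ?_ e'
    simp only [MulOpposite.op_sub, MulOpposite.op_add, MulOpposite.op_mul,
      sub_smul, add_smul, smul_add, mul_smul]
    abel
  -- additivity of the middle corner map
  have hsadd : ∀ m m' : M, (d ⟨0, m + m', 0⟩ : Tri A M B).m
      = (d ⟨0, m, 0⟩).m + (d ⟨0, m', 0⟩).m := by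
    intro m m'
    rw [show (⟨0, m + m', 0⟩ : Tri A M B) = ⟨0, m, 0⟩ + ⟨0, m', 0⟩ by ext <;> simp,
      map_add, add_m]
  -- characterization of d
  have dchar : ∀ x : Tri A M B, d x
      = ⟨(d ⟨x.a, 0, 0⟩).a,
         x.a • m0 + (d ⟨0, x.m, 0⟩).m - MulOpposite.op x.b • m0,
         (d ⟨0, 0, x.b⟩).b⟩ := by
    intro x
    have hx : d x = d ⟨x.a, 0, 0⟩ + d ⟨0, x.m, 0⟩ + d ⟨0, 0, x.b⟩ := by
      rw [← map_add, ← map_add]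
      congr 1
      ext <;> simp
    rw [hx]
    ext
    · simp [F2a, F3a, show (d ⟨0, x.m, 0⟩ : Tri A M B).a = 0 from F2a x.m,
        show (d ⟨0, 0, x.b⟩ : Tri A M B).a = 0 from F3a x.b]
    · simp only [add_m, F1m, F2b, F3m, show (d ⟨x.a, 0, 0⟩ : Tri A M B).m = x.a • m0 from F1m x.a,
        show (d ⟨0, 0, x.b⟩ : Tri A M B).m = -(MulOpposite.op x.b • m0) from F3m x.b]
      abel
    · simp [F1b, F2b, show (d ⟨x.a, 0, 0⟩ : Tri A M B).b = 0 from F1b x.a,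
        show (d ⟨0, x.m, 0⟩ : Tri A M B).b = 0 from F2b x.m]
  intro x y
  rw [dchar (x * y), dchar x, dchar y]
  ext
  · simp only [mul_a]
    exact fd x.a y.a
  · simp only [mul_m, mul_a, mul_b, add_m]
    rw [hsadd]
    rw [R1, R2]
    simp only [smul_add, smul_sub, smul_smul, ← MulOpposite.op_mul]
    rw [← smul_comm x.a (MulOpposite.op y.b) m0]
    simp only [mul_smul]
    abel
  · simp only [mul_b]
    exact wd x.b y.b

end Jordan

section Helpers

lemma mul_natCast_natCast {R : Type*} [Ring R] (z : R) (a b : ℕ) :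
    z * (a : R) * (b : R) = (a * b) • z := by
  rw [mul_assoc, ← Nat.cast_mul, nsmul_eq_mul]
  exact ((Nat.cast_commute (a * b) z).eq).symm

lemma add_pow_nat {R : Type*} [Ring R] (X : R) (t e : ℕ) :
    (X + (t : R)) ^ e = ∑ m ∈ Finset.range (e + 1), (t ^ (e - m) * e.choose m) • X ^ m := by
  rw [Commute.add_pow (Nat.cast_commute t X).symm]
  refine Finset.sum_congr rfl fun m _ => ?_
  rw [← Nat.cast_pow]
  exact mul_natCast_natCast _ _ _

end Helpers

/-- Theorem 2.5: on a unital triangular algebra (over ℚ, so that division by $n$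
makes sense), linear maps with $2Ψ(X^n) = X^{n-1}Ω(X) + Ω(X)X^{n-1}$ and $Ω(1)$
central are two-sided generalized derivations; explicitly $Δ(X) = Ω(X) − Ω(1)X$ is
a derivation, $Ω(XY) = Ω(X)Y + XΔ(Y) = Δ(X)Y + XΩ(Y)$, and
$Ψ(X) = Δ(X)/n + Ω(1)X$ is a two-sided generalized derivation as well. -/
theorem stmt_3 {A M B : Type*} [Ring A] [Ring B] [AddCommGroup M]
    [Algebra ℚ A] [Algebra ℚ B] [Module ℚ M]
    [Module A M] [Module Bᵐᵒᵖ M] [SMulCommClass A Bᵐᵒᵖ M]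
    (hfA : ∀ a : A, (∀ m : M, a • m = 0) → a = 0)
    (hfB : ∀ b : B, (∀ m : M, MulOpposite.op b • m = 0) → b = 0)
    (n : ℕ) (hn : 1 < n)
    (Ψ Ω : Tri A M B → Tri A M B)
    (hΨadd : ∀ X Y, Ψ (X + Y) = Ψ X + Ψ Y)
    (hΩadd : ∀ X Y, Ω (X + Y) = Ω X + Ω Y)
    (h1 : ∀ X, 2 • Ψ (X ^ n) = X ^ (n - 1) * Ω X + Ω X * X ^ (n - 1))
    (hΩ1 : ∀ Y, Ω 1 * Y = Y * Ω 1) :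
    ∃ Δ : Tri A M B → Tri A M B,
      (∀ X, Δ X = Ω X - Ω 1 * X) ∧
      (∀ X Y, Δ (X * Y) = Δ X * Y + X * Δ Y) ∧
      (∀ X Y, Ω (X * Y) = Ω X * Y + X * Δ Y ∧ Ω (X * Y) = Δ X * Y + X * Ω Y) ∧
      (∀ X, Ψ X = ((n : ℚ)⁻¹) • Δ X + Ω 1 * X) ∧
      (∀ X Y, Ψ (X * Y) = Ψ X * Y + X * ((n : ℚ)⁻¹ • Δ Y) ∧
        Ψ (X * Y) = ((n : ℚ)⁻¹ • Δ X) * Y + X * Ψ Y) := by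
  have hnQ : (2:ℚ) ≤ (n:ℚ) := by exact_mod_cast hn
  have hn1 : (1:ℕ) ≤ n := by omega
  -- torsion-freeness
  have hT2 : ∀ x : Tri A M B, x + x = 0 → x = 0 := by
    intro x h
    have h2 : (2:ℚ) • x = 0 := by rw [two_smul]; exact h
    calc x = ((2:ℚ)⁻¹ * 2) • x := by norm_num
      _ = (2:ℚ)⁻¹ • ((2:ℚ) • x) := mul_smul _ _ _
      _ = 0 := by rw [h2, smul_zero]
  set ψ : Tri A M B →+ Tri A M B := AddMonoidHom.mk' Ψ hΨadd with hψdef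
  set ω : Tri A M B →+ Tri A M B := AddMonoidHom.mk' Ω hΩadd with hωdef
  have qmul_left : ∀ (c : ℚ) (u v : Tri A M B), u * (c • v) = c • (u * v) :=
    fun c u v => map_rat_smul (AddMonoidHom.mulLeft u) c v
  have qmul_right : ∀ (c : ℚ) (u v : Tri A M B), (c • u) * v = c • (u * v) :=
    fun c u v => map_rat_smul (AddMonoidHom.mulRight v) c u
  -- coefficient relations
  have hc : ∀ (X : Tri A M B) (k : ℕ), k < n + 1 →
      ((n.choose k : ℚ) * 2) • Ψ (X ^ (n - k))
        - ((n-1).choose k : ℚ) • (X ^ (n-1-k) * Ω X + Ω X * X ^ (n-1-k))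
        - (if k = 0 then 0 else (((n-1).choose (k-1) : ℚ) * 2) • (Ω 1 * X ^ (n - k))) = 0 := by
    intro X k hk
    have hS : ∀ t : ℕ, ∑ k ∈ Finset.range (n+1), ((t:ℚ))^k •
        (((n.choose k : ℚ) * 2) • Ψ (X ^ (n - k))
          - ((n-1).choose k : ℚ) • (X ^ (n-1-k) * Ω X + Ω X * X ^ (n-1-k))
          - (if k = 0 then 0 else (((n-1).choose (k-1) : ℚ) * 2) • (Ω 1 * X ^ (n - k)))) = 0 := by
      intro t
      have base := h1 (X + (t : Tri A M B))
      have hΩt : Ω (X + (t : Tri A M B)) = Ω X + t • Ω 1 := by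
        rw [show ((t:ℕ) : Tri A M B) = t • (1 : Tri A M B) by rw [nsmul_eq_mul, mul_one],
          hΩadd]
        congr 1
        exact map_nsmul ω t 1
      set P := (X + (t : Tri A M B)) ^ (n-1) with hP
      have hPe : P = ∑ j ∈ Finset.range n, (t ^ (n-1-j) * (n-1).choose j) • X ^ j := by
        rw [hP, add_pow_nat X t (n-1), show n - 1 + 1 = n by omega]
      have base' : 2 • Ψ ((X + (t : Tri A M B)) ^ n)
          = (P * Ω X + Ω X * P) + (t • (Ω 1 * P) + t • (Ω 1 * P)) := by
        rw [base, hΩt, mul_add, add_mul, mul_smul_comm t P (Ω 1), smul_mul_assoc t (Ω 1) P,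
          show P * Ω 1 = Ω 1 * P from (hΩ1 P).symm]
        abel
      have LA : 2 • Ψ ((X + (t : Tri A M B)) ^ n)
          = ∑ k ∈ Finset.range (n+1), (t:ℚ)^k • (((n.choose k : ℚ) * 2) • Ψ (X ^ (n-k))) := by
        calc 2 • Ψ ((X + (t : Tri A M B)) ^ n)
            = 2 • Ψ (∑ m ∈ Finset.range (n+1), (t ^ (n - m) * n.choose m) • X ^ m) := by
              rw [add_pow_nat]
          _ = ∑ m ∈ Finset.range (n+1), 2 • ((t ^ (n - m) * n.choose m) • Ψ (X ^ m)) := by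
              rw [show Ψ (∑ m ∈ Finset.range (n+1), (t ^ (n - m) * n.choose m) • X ^ m)
                  = ∑ m ∈ Finset.range (n+1), Ψ ((t ^ (n - m) * n.choose m) • X ^ m) from
                map_sum ψ _ _, Finset.smul_sum]
              refine Finset.sum_congr rfl fun m _ => ?_
              rw [show Ψ ((t ^ (n - m) * n.choose m) • X ^ m)
                  = (t ^ (n - m) * n.choose m) • Ψ (X ^ m) from map_nsmul ψ _ _]
          _ = ∑ j ∈ Finset.range (n+1), 2 • ((t ^ (n - (n+1-1-j)) * n.choose (n+1-1-j)) •
                Ψ (X ^ (n+1-1-j))) := (Finset.sum_range_reflect _ _).symm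
          _ = ∑ k ∈ Finset.range (n+1), (t:ℚ)^k • (((n.choose k : ℚ) * 2) • Ψ (X ^ (n-k))) := by
              refine Finset.sum_congr rfl fun k hk' => ?_
              have hkn : k ≤ n := by have := Finset.mem_range.mp hk'; omega
              rw [show n + 1 - 1 - k = n - k by omega, Nat.sub_sub_self hkn,
                Nat.choose_symm hkn, smul_smul, smul_smul, ← Nat.cast_smul_eq_nsmul ℚ]
              congr 1
              push_cast
              ring
      have LB : P * Ω X + Ω X * P
          = ∑ k ∈ Finset.range (n+1), (t:ℚ)^k • (((n-1).choose k : ℚ) •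
              (X ^ (n-1-k) * Ω X + Ω X * X ^ (n-1-k))) := by
        calc P * Ω X + Ω X * P
            = ∑ j ∈ Finset.range n, (t ^ (n-1-j) * (n-1).choose j) •
                (X ^ j * Ω X + Ω X * X ^ j) := by
              rw [hPe, Finset.sum_mul, Finset.mul_sum, ← Finset.sum_add_distrib]
              refine Finset.sum_congr rfl fun j _ => ?_
              rw [smul_mul_assoc, mul_smul_comm, smul_add]
          _ = ∑ j ∈ Finset.range n, (t ^ (n-1-(n-1-j)) * (n-1).choose (n-1-j)) •
                (X ^ (n-1-j) * Ω X + Ω X * X ^ (n-1-j)) := (Finset.sum_range_reflect _ _).symm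
          _ = ∑ k ∈ Finset.range n, (t:ℚ)^k • (((n-1).choose k : ℚ) •
                (X ^ (n-1-k) * Ω X + Ω X * X ^ (n-1-k))) := by
              refine Finset.sum_congr rfl fun k hk' => ?_
              have hkn : k ≤ n-1 := by have := Finset.mem_range.mp hk'; omega
              rw [Nat.sub_sub_self hkn, Nat.choose_symm hkn, smul_smul,
                ← Nat.cast_smul_eq_nsmul ℚ]
              congr 1
              push_cast
              ring
          _ = ∑ k ∈ Finset.range (n+1), (t:ℚ)^k • (((n-1).choose k : ℚ) •
                (X ^ (n-1-k) * Ω X + Ω X * X ^ (n-1-k))) := by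
              rw [Finset.sum_range_succ,
                show (((n-1).choose n : ℚ)) = 0 by
                  rw [Nat.choose_eq_zero_of_lt (by omega)]; norm_num,
                zero_smul, smul_zero, add_zero]
      have LC : t • (Ω 1 * P) + t • (Ω 1 * P)
          = ∑ k ∈ Finset.range (n+1), (t:ℚ)^k • (if k = 0 then 0 else
              (((n-1).choose (k-1) : ℚ) * 2) • (Ω 1 * X ^ (n - k))) := by
        calc t • (Ω 1 * P) + t • (Ω 1 * P)
            = ∑ j ∈ Finset.range n, (t ^ (n-1-j) * (n-1).choose j * 2 * t) •
                (Ω 1 * X ^ j) := by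
              rw [hPe, Finset.mul_sum, Finset.smul_sum, ← Finset.sum_add_distrib]
              refine Finset.sum_congr rfl fun j _ => ?_
              rw [mul_smul_comm, smul_smul, ← add_smul]
              congr 1
              ring
          _ = ∑ j ∈ Finset.range n, (t ^ (n-1-(n-1-j)) * (n-1).choose (n-1-j) * 2 * t) •
                (Ω 1 * X ^ (n-1-j)) := (Finset.sum_range_reflect _ _).symm
          _ = ∑ i ∈ Finset.range n, (t:ℚ)^(i+1) • ((((n-1).choose i : ℚ) * 2) •
                (Ω 1 * X ^ (n-(i+1)))) := by
              refine Finset.sum_congr rfl fun i hi => ?_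
              have hin : i ≤ n-1 := by have := Finset.mem_range.mp hi; omega
              rw [Nat.sub_sub_self hin, Nat.choose_symm hin,
                show n - (i+1) = n-1-i by omega, smul_smul, ← Nat.cast_smul_eq_nsmul ℚ]
              congr 1
              push_cast
              ring
          _ = ∑ k ∈ Finset.range (n+1), (t:ℚ)^k • (if k = 0 then 0 else
                (((n-1).choose (k-1) : ℚ) * 2) • (Ω 1 * X ^ (n - k))) := by
              rw [Finset.sum_range_succ']
              simp [Nat.add_sub_cancel]
      have hsplit : ∑ k ∈ Finset.range (n+1), ((t:ℚ))^k •
          (((n.choose k : ℚ) * 2) • Ψ (X ^ (n - k))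
            - ((n-1).choose k : ℚ) • (X ^ (n-1-k) * Ω X + Ω X * X ^ (n-1-k))
            - (if k = 0 then 0 else (((n-1).choose (k-1) : ℚ) * 2) • (Ω 1 * X ^ (n - k))))
          = (∑ k ∈ Finset.range (n+1), (t:ℚ)^k • (((n.choose k : ℚ) * 2) • Ψ (X ^ (n-k))))
            - (∑ k ∈ Finset.range (n+1), (t:ℚ)^k • (((n-1).choose k : ℚ) •
                (X ^ (n-1-k) * Ω X + Ω X * X ^ (n-1-k))))
            - (∑ k ∈ Finset.range (n+1), (t:ℚ)^k • (if k = 0 then 0 else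
                (((n-1).choose (k-1) : ℚ) * 2) • (Ω 1 * X ^ (n - k)))) := by
        rw [← Finset.sum_sub_distrib, ← Finset.sum_sub_distrib]
        refine Finset.sum_congr rfl fun j _ => ?_
        rw [smul_sub, smul_sub]
      rw [hsplit, ← LA, ← LB, ← LC, base']
      abel
    exact poly_vanish (n+1) _ hS k (Finset.mem_range.mpr hk)
  -- key1 : n Ψ X = Ω X + (n-1) Ω(1) X
  have key1 : ∀ X : Tri A M B, (n:ℚ) • Ψ X = Ω X + ((n:ℚ) - 1) • (Ω 1 * X) := by
    intro X
    have E := hc X (n-1) (by omega)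
    rw [if_neg (by omega : ¬ (n-1) = 0)] at E
    rw [show n - (n-1) = 1 by omega, show n-1-(n-1) = 0 by omega,
      show n-1-1 = n-2 by omega] at E
    have c1 : n.choose (n-1) = n := by
      rw [show n - 1 = n - 1 from rfl, Nat.choose_symm hn1, Nat.choose_one_right]
    have c2 : (n-1).choose (n-2) = n-1 := by
      rw [show n - 2 = (n-1) - 1 by omega, Nat.choose_symm (by omega : 1 ≤ n - 1),
        Nat.choose_one_right]
    rw [c1, c2, Nat.choose_self, pow_zero, pow_one] at E
    rw [sub_sub, sub_eq_zero] at E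
    -- E : ((n:ℚ)*2) • Ψ X = 1 • (1 * Ω X + Ω X * 1) + ((n-1:ℕ):ℚ)*2 • (Ω 1 * X)
    have E2 := congrArg (fun v => (2:ℚ)⁻¹ • v) E
    simp only [smul_add, smul_smul, one_mul, mul_one, Nat.cast_one, one_smul] at E2
    rw [show (2:ℚ)⁻¹ * ((n:ℚ) * 2) = (n:ℚ) by ring] at E2
    rw [E2]
    rw [show ((2:ℚ)⁻¹ * (((n-1:ℕ):ℚ) * 2)) = ((n:ℚ) - 1) by
      rw [Nat.cast_sub hn1]; push_cast; ring]
    module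
  -- key2
  have key2 : ∀ X : Tri A M B, Ω (X * X) = X * Ω X + Ω X * X - Ω 1 * (X * X) := by
    intro X
    have e1 := key1 (X * X)
    rcases Nat.lt_or_ge n 3 with h3 | h3
    · -- n = 2
      have hn2 : n = 2 := by omega
      subst hn2
      have E := hc X 0 (by omega)
      rw [if_pos rfl] at E
      simp only [Nat.choose_zero_right, Nat.cast_one, one_mul, one_smul, Nat.sub_zero,
        sub_zero, pow_one, pow_two] at E
      rw [sub_eq_zero] at E
      norm_num at E e1
      exact eq_sub_iff_add_eq.mpr (E.symm.trans e1).symm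
    · -- n ≥ 3
      have E := hc X (n-2) (by omega)
      rw [if_neg (by omega)] at E
      rw [show n - (n-2) = 2 by omega, show n-1-(n-2) = 1 by omega,
        show n-2-1 = n-3 by omega] at E
      have c2 : ((n.choose (n-2)):ℚ) = (n:ℚ) * ((n:ℚ)-1) / 2 := by
        rw [Nat.choose_symm (by omega : 2 ≤ n)]
        exact_mod_cast Nat.cast_choose_two ℚ n
      have c3 : (((n-1).choose (n-2)):ℚ) = (n:ℚ) - 1 := by
        rw [show n-2 = (n-1)-1 by omega, Nat.choose_symm (by omega : 1 ≤ n-1),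
          Nat.choose_one_right, Nat.cast_sub hn1, Nat.cast_one]
      have c4 : (((n-1).choose (n-3)):ℚ) = ((n:ℚ)-1)*((n:ℚ)-2)/2 := by
        rw [show n-3 = (n-1)-2 by omega, Nat.choose_symm (by omega : 2 ≤ n-1),
          Nat.cast_choose_two, Nat.cast_sub hn1, Nat.cast_one]
        ring
      rw [c2, c3, c4, pow_two, pow_one, sub_sub, sub_eq_zero] at E
      set K := Ω 1 * (X * X) with hK
      set J := X * Ω X + Ω X * X with hJ
      have hne : (n:ℚ) - 1 ≠ 0 := by linarith
      have E2 := congrArg (fun v => ((n:ℚ)-1)⁻¹ • v) E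
      simp only [smul_add, smul_smul] at E2
      rw [show ((n:ℚ)-1)⁻¹ * ((n:ℚ)*((n:ℚ)-1)/2*2) = (n:ℚ) by field_simp] at E2
      rw [show ((n:ℚ)-1)⁻¹ * (((n:ℚ)-1)*((n:ℚ)-2)/2*2) = (n:ℚ)-2 by field_simp] at E2
      rw [inv_mul_cancel₀ hne, one_smul] at E2
      -- E2 : (n:ℚ) • Ψ (X*X) = J + ((n:ℚ)-2) • K
      have comb := e1.symm.trans E2
      -- comb : Ω (X*X) + ((n:ℚ)-1) • K = J + ((n:ℚ)-2) • K
      have h4 : ((n:ℚ)-2) • K - ((n:ℚ)-1) • K = -K := by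
        rw [← sub_smul, show ((n:ℚ)-2) - ((n:ℚ)-1) = -1 by ring, neg_smul, one_smul]
      calc Ω (X*X) = (Ω (X*X) + ((n:ℚ)-1) • K) - ((n:ℚ)-1) • K := by abel
        _ = (J + ((n:ℚ)-2) • K) - ((n:ℚ)-1) • K := by rw [comb]
        _ = J + (((n:ℚ)-2) • K - ((n:ℚ)-1) • K) := by abel
        _ = J + -K := by rw [h4]
        _ = J - K := by abel
  -- the derivation
  set Δ : Tri A M B → Tri A M B := fun X => Ω X - Ω 1 * X with hΔdef
  have hΔadd : ∀ x y : Tri A M B, Δ (x + y) = Δ x + Δ y := by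
    intro x y
    simp only [hΔdef, hΩadd, mul_add]
    abel
  set δ : Tri A M B →+ Tri A M B := AddMonoidHom.mk' Δ hΔadd with hδdef
  have hJord : ∀ x : Tri A M B, δ (x * x) = x * δ x + δ x * x := by
    intro x
    show Δ (x * x) = x * Δ x + Δ x * x
    simp only [hΔdef]
    rw [key2 x, mul_sub, sub_mul,
      show x * (Ω 1 * x) = Ω 1 * (x * x) by rw [← mul_assoc, ← hΩ1 x, mul_assoc],
      show Ω 1 * x * x = Ω 1 * (x * x) by rw [mul_assoc]]
    abel
  have hder : ∀ x y : Tri A M B, Δ (x * y) = Δ x * y + x * Δ y :=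
    Tri.jordan_deriv hfA hfB δ hT2 hJord
  -- Ψ in terms of Δ
  have hΨΔ : ∀ X : Tri A M B, Ψ X = (n:ℚ)⁻¹ • Δ X + Ω 1 * X := by
    intro X
    have e1 := key1 X
    have hne : (n:ℚ) ≠ 0 := by linarith
    have : Ψ X = (n:ℚ)⁻¹ • ((n:ℚ) • Ψ X) := by
      rw [smul_smul, inv_mul_cancel₀ hne, one_smul]
    rw [this, e1, smul_add]
    simp only [hΔdef, smul_sub, smul_smul]
    rw [show (n:ℚ)⁻¹ * ((n:ℚ) - 1) = 1 - (n:ℚ)⁻¹ by field_simp]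
    rw [sub_smul, one_smul]
    abel
  -- assemble
  have hΩΔ : ∀ Z : Tri A M B, Ω Z = Δ Z + Ω 1 * Z := by
    intro Z; simp only [hΔdef]; abel
  refine ⟨Δ, fun X => rfl, hder, ?_, hΨΔ, ?_⟩
  · intro X Y
    constructor
    · rw [hΩΔ (X * Y), hder, hΩΔ X, add_mul,
        show Ω 1 * X * Y = Ω 1 * (X * Y) by rw [mul_assoc]]
      abel
    · rw [hΩΔ (X * Y), hder, hΩΔ Y, mul_add,
        show X * (Ω 1 * Y) = Ω 1 * (X * Y) by rw [← mul_assoc, ← hΩ1 X, mul_assoc]]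
      abel
  · intro X Y
    constructor
    · rw [hΨΔ (X * Y), hΨΔ X, hder]
      rw [add_mul, qmul_right, smul_add, mul_assoc, qmul_left]
      abel
    · rw [hΨΔ (X * Y), hΨΔ Y, hder]
      rw [mul_add, qmul_left, smul_add, qmul_right,
        show X * (Ω 1 * Y) = Ω 1 * (X * Y) by rw [← mul_assoc, ← hΩ1 X, mul_assoc]]
      abel
end

section
/- Let R be a unital algebra over a field of characteristic zero, n > 1 an integer, γ a central invertible element, and Ψ, Ω : R → R additive maps satisfying Ψ(X^n) = γ·X^(n-1)·Ω(X) = γ·Ω(X)·X^(n-1) for all X ∈ R. Then Ω(X)·X = X·Ω(X) for all X ∈ R, i.e., Ω is a commuting map, and the map Δ(X) = Ω(X) − Ω(1)·X is a Jordan derivation satisfying Δ(X)·X = X·Δ(X) for all X, provided Ω(1) is central. -/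
open Finset Polynomial

lemma sd6_natCast_isUnit (𝕜 : Type*) {R : Type*} [Field 𝕜] [CharZero 𝕜] [Ring R] [Algebra 𝕜 R]
    {c : ℕ} (hc : c ≠ 0) : IsUnit (c : R) := by
  have h : algebraMap 𝕜 R (c : 𝕜) = (c : R) := map_natCast _ c
  rw [← h]
  exact (isUnit_iff_ne_zero.mpr (Nat.cast_ne_zero.mpr hc)).map _

lemma sd6_nsmul_cancel (𝕜 : Type*) {R : Type*} [Field 𝕜] [CharZero 𝕜] [Ring R] [Algebra 𝕜 R]
    {c : ℕ} (hc : c ≠ 0) {y z : R} (h : c • y = c • z) : y = z := by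
  have hu := sd6_natCast_isUnit 𝕜 (R := R) hc
  rw [nsmul_eq_mul, nsmul_eq_mul] at h
  exact hu.mul_left_cancel h

lemma sd6_coeff_extract (𝕜 : Type*) {R : Type*} [Field 𝕜] [CharZero 𝕜] [Ring R] [Algebra 𝕜 R]
    {d : ℕ} (c : ℕ → R)
    (h : ∀ m : ℕ, ∑ j ∈ Finset.range d, (m : ℕ) ^ j • c j = 0) :
    ∀ j, j < d → c j = 0 := by
  intro j hj
  rw [← Module.forall_dual_apply_eq_zero_iff 𝕜]
  intro φ
  set p : Polynomial 𝕜 := ∑ i ∈ Finset.range d, Polynomial.C (φ (c i)) * Polynomial.X ^ i with hp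
  have heval : ∀ m : ℕ, p.eval (m : 𝕜) = 0 := by
    intro m
    have : p.eval (m : 𝕜) = φ (∑ j ∈ Finset.range d, (m : ℕ) ^ j • c j) := by
      rw [map_sum, hp, Polynomial.eval_finset_sum]
      refine Finset.sum_congr rfl fun i _ => ?_
      have : (m ^ i : ℕ) • c i = ((m : 𝕜) ^ i) • c i := by
        rw [← Nat.cast_smul_eq_nsmul 𝕜]; push_cast; ring_nf
      rw [this, map_smul, smul_eq_mul, Polynomial.eval_mul, Polynomial.eval_C,
        Polynomial.eval_pow, Polynomial.eval_X]
      ring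
    rw [this, h m, map_zero]
  have hp0 : p = 0 := by
    apply Polynomial.eq_zero_of_infinite_isRoot
    apply Set.Infinite.mono (s := Set.range (Nat.cast : ℕ → 𝕜))
    · rintro _ ⟨m, rfl⟩; exact heval m
    · exact Set.infinite_range_of_injective Nat.cast_injective
  have hco : p.coeff j = φ (c j) := by
    rw [hp, Polynomial.finset_sum_coeff]
    rw [Finset.sum_eq_single j]
    · simp
    · intro b _ hbj
      simp [Polynomial.coeff_C_mul, Polynomial.coeff_X_pow, Ne.symm hbj]
    · intro hjd; exact absurd (Finset.mem_range.mpr hj) hjd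
  rw [← hco, hp0, Polynomial.coeff_zero]

lemma sd6_add_pow {R : Type*} [Ring R] (x : R) (m k : ℕ) :
    (x + (m : R)) ^ k = ∑ j ∈ Finset.range (k + 1), (m ^ j * k.choose j) • x ^ (k - j) := by
  rw [add_comm, Commute.add_pow (Nat.cast_commute m x) k]
  refine Finset.sum_congr rfl fun j _ => ?_
  have hc : x ^ (k - j) * (k.choose j : R) = (k.choose j : R) * x ^ (k - j) :=
    ((Nat.cast_commute (k.choose j) (x ^ (k - j)))).eq.symm
  rw [← Nat.cast_pow, mul_assoc, hc, ← mul_assoc, ← Nat.cast_mul, ← nsmul_eq_mul]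

/-- From the two-sided identity `Ψ(X^n) = γX^(n-1)Ω(X) = γΩ(X)X^(n-1)` on a unital
algebra over a field of characteristic zero (with `γ` central invertible), `Ω` is a
commuting map, and if `Ω(1)` is central then `Δ(X) = Ω(X) − Ω(1)X` is a commuting
Jordan derivation. -/
theorem stmt_6 {𝕜 R : Type*} [Field 𝕜] [CharZero 𝕜] [Ring R] [Algebra 𝕜 R]
    (n : ℕ) (hn : 1 < n)
    (γ : R) (hγc : ∀ y : R, γ * y = y * γ) (hγu : IsUnit γ)
    (Ψ Ω : R → R)
    (hΨadd : ∀ x y, Ψ (x + y) = Ψ x + Ψ y)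
    (hΩadd : ∀ x y, Ω (x + y) = Ω x + Ω y)
    (h1 : ∀ x, Ψ (x ^ n) = γ * (x ^ (n - 1) * Ω x))
    (h2 : ∀ x, γ * (x ^ (n - 1) * Ω x) = γ * (Ω x * x ^ (n - 1))) :
    (∀ x, Ω x * x = x * Ω x) ∧
    ((∀ y, Ω 1 * y = y * Ω 1) →
      (∀ x, (Ω (x ^ 2) - Ω 1 * x ^ 2) =
        (Ω x - Ω 1 * x) * x + x * (Ω x - Ω 1 * x)) ∧
      (∀ x, (Ω x - Ω 1 * x) * x = x * (Ω x - Ω 1 * x))) := by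
  classical
  obtain ⟨N, rfl⟩ : ∃ N, n = N + 1 := ⟨n - 1, by omega⟩
  have hN : 1 ≤ N := by omega
  simp only [Nat.add_sub_cancel] at h1 h2
  -- additive-map facts
  set Ω' : R →+ R := AddMonoidHom.mk' Ω hΩadd with hΩ'
  set Ψ' : R →+ R := AddMonoidHom.mk' Ψ hΨadd with hΨ'
  have hΩs : ∀ (c : ℕ) (y : R), Ω (c • y) = c • Ω y := fun c y => Ω'.map_nsmul c y
  have hΨs : ∀ (c : ℕ) (y : R), Ψ (c • y) = c • Ψ y := fun c y => Ψ'.map_nsmul c y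
  have hcomm : ∀ x : R, x ^ N * Ω x = Ω x * x ^ N := fun x => hγu.mul_left_cancel (h2 x)
  have hΩcast : ∀ (x : R) (m : ℕ), Ω (x + (m : R)) = Ω x + m • Ω 1 := by
    intro x m
    rw [show ((m : R)) = m • (1 : R) by simp, hΩadd, hΩs]
  -- ### Step 1: coefficient extraction for the commutator identity
  have key1 : ∀ (x : R) (j : ℕ), j < N + 2 →
      (N.choose j • (x ^ (N - j) * Ω x - Ω x * x ^ (N - j)) +
        (if j = 0 then 0 else
          N.choose (j - 1) • (x ^ (N + 1 - j) * Ω 1 - Ω 1 * x ^ (N + 1 - j)))) = 0 := by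
    intro x
    apply sd6_coeff_extract 𝕜
    intro m
    set T : R := x + (m : R) with hT
    have hx : T ^ N * (Ω x + m • Ω 1) = (Ω x + m • Ω 1) * T ^ N := by
      rw [← hΩcast x m]; exact hcomm T
    have hSA : (∑ j ∈ Finset.range (N + 2),
        m ^ j • (N.choose j • (x ^ (N - j) * Ω x - Ω x * x ^ (N - j)))) =
        T ^ N * Ω x - Ω x * T ^ N := by
      rw [Finset.sum_range_succ, Nat.choose_succ_self, zero_smul, smul_zero, add_zero,
        hT, sd6_add_pow, Finset.sum_mul, Finset.mul_sum, ← Finset.sum_sub_distrib]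
      refine Finset.sum_congr rfl fun j _ => ?_
      rw [smul_mul_assoc, mul_smul_comm, ← smul_sub, smul_smul]
    have hSB : (∑ j ∈ Finset.range (N + 2),
        m ^ j • (if j = 0 then (0 : R) else
          N.choose (j - 1) • (x ^ (N + 1 - j) * Ω 1 - Ω 1 * x ^ (N + 1 - j)))) =
        m • (T ^ N * Ω 1 - Ω 1 * T ^ N) := by
      rw [Finset.sum_range_succ']
      simp only [eq_self_iff_true, if_true, ite_true, smul_zero, add_zero, Nat.sub_zero,
        Nat.add_sub_cancel, Nat.succ_sub_succ_eq_sub, if_neg (Nat.succ_ne_zero _)]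
      rw [hT, sd6_add_pow, Finset.sum_mul, Finset.mul_sum, ← Finset.sum_sub_distrib,
        Finset.smul_sum]
      refine Finset.sum_congr rfl fun j _ => ?_
      rw [smul_mul_assoc, mul_smul_comm, ← smul_sub, smul_smul, smul_smul]
      congr 1
      ring
    calc (∑ j ∈ Finset.range (N + 2), m ^ j •
            (N.choose j • (x ^ (N - j) * Ω x - Ω x * x ^ (N - j)) +
              (if j = 0 then 0 else
                N.choose (j - 1) • (x ^ (N + 1 - j) * Ω 1 - Ω 1 * x ^ (N + 1 - j)))))
        = (∑ j ∈ Finset.range (N + 2),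
            m ^ j • (N.choose j • (x ^ (N - j) * Ω x - Ω x * x ^ (N - j)))) +
          (∑ j ∈ Finset.range (N + 2),
            m ^ j • (if j = 0 then (0 : R) else
              N.choose (j - 1) • (x ^ (N + 1 - j) * Ω 1 - Ω 1 * x ^ (N + 1 - j)))) := by
          rw [← Finset.sum_add_distrib]
          exact Finset.sum_congr rfl fun j _ => smul_add _ _ _
      _ = (T ^ N * Ω x - Ω x * T ^ N) + m • (T ^ N * Ω 1 - Ω 1 * T ^ N) := by
          rw [hSA, hSB]
      _ = 0 := by
          rw [smul_sub, sub_add_sub_comm, ← mul_smul_comm, ← smul_mul_assoc,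
            ← mul_add, ← add_mul, hx, sub_self]
  -- Ω 1 is central
  have hΩ1c : ∀ y : R, y * Ω 1 = Ω 1 * y := by
    intro y
    have h := key1 y N (by omega)
    have e1 : N + 1 - N = 1 := by omega
    have e2 : N.choose (N - 1) = N := by
      have := Nat.choose_symm (n := N) (k := 1) hN
      simpa [Nat.choose_one_right] using this
    rw [if_neg (by omega : ¬ N = 0), e1, e2, Nat.sub_self, pow_zero, pow_one,
      Nat.choose_self, one_mul, mul_one, sub_self, smul_zero, zero_add] at h
    have h' : N • (y * Ω 1 - Ω 1 * y) = N • (0 : R) := by rw [smul_zero]; exact h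
    exact sub_eq_zero.mp (sd6_nsmul_cancel 𝕜 (by omega : N ≠ 0) h')
  -- Ω is commuting
  have comm1 : ∀ x : R, Ω x * x = x * Ω x := by
    intro x
    have h := key1 x (N - 1) (by omega)
    have e1 : N - (N - 1) = 1 := by omega
    have e2 : N + 1 - (N - 1) = 2 := by omega
    have e3 : N.choose (N - 1) = N := by
      have := Nat.choose_symm (n := N) (k := 1) hN
      simpa [Nat.choose_one_right] using this
    rw [e1, e2, pow_one] at h
    have hzero : (if N - 1 = 0 then (0 : R) else
        N.choose (N - 1 - 1) • (x ^ 2 * Ω 1 - Ω 1 * x ^ 2)) = 0 := by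
      split
      · rfl
      · rw [sub_eq_zero_of_eq (hΩ1c (x ^ 2)), smul_zero]
    rw [hzero, add_zero, e3] at h
    have h' : N • (x * Ω x - Ω x * x) = N • (0 : R) := by rw [smul_zero]; exact h
    exact (sub_eq_zero.mp (sd6_nsmul_cancel 𝕜 (by omega : N ≠ 0) h')).symm
  -- ### Step 2: coefficient extraction for the Ψ identity
  have key2 : ∀ (x : R) (j : ℕ), j < N + 3 →
      ((N + 1).choose j • Ψ (x ^ (N + 1 - j)) -
        (N.choose j • (γ * (x ^ (N - j) * Ω x)) +
          (if j = 0 then 0 else N.choose (j - 1) • (γ * (x ^ (N + 1 - j) * Ω 1))))) = 0 := by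
    intro x
    apply sd6_coeff_extract 𝕜
    intro m
    set T : R := x + (m : R) with hT
    have hmain : Ψ (T ^ (N + 1)) = γ * (T ^ N * (Ω x + m • Ω 1)) := by
      rw [← hΩcast x m]; exact h1 T
    have hS1 : (∑ j ∈ Finset.range (N + 3),
        m ^ j • ((N + 1).choose j • Ψ (x ^ (N + 1 - j)))) = Ψ (T ^ (N + 1)) := by
      have hmap : Ψ (∑ j ∈ Finset.range (N + 2), (m ^ j * (N + 1).choose j) • x ^ (N + 1 - j))
          = ∑ j ∈ Finset.range (N + 2), (m ^ j * (N + 1).choose j) • Ψ (x ^ (N + 1 - j)) := by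
        rw [show Ψ = ⇑Ψ' from rfl, map_sum]
        exact Finset.sum_congr rfl fun j _ => by rw [map_nsmul]
      rw [Finset.sum_range_succ, Nat.choose_succ_self, zero_smul, smul_zero, add_zero,
        hT, sd6_add_pow, hmap]
      exact Finset.sum_congr rfl fun j _ => smul_smul _ _ _
    have hS2 : (∑ j ∈ Finset.range (N + 3),
        m ^ j • (N.choose j • (γ * (x ^ (N - j) * Ω x)))) = γ * (T ^ N * Ω x) := by
      rw [Finset.sum_range_succ, Finset.sum_range_succ,
        Nat.choose_eq_zero_of_lt (by omega : N < N + 2), Nat.choose_succ_self,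
        zero_smul, smul_zero, add_zero, zero_smul, smul_zero, add_zero,
        hT, sd6_add_pow, Finset.sum_mul, Finset.mul_sum]
      refine Finset.sum_congr rfl fun j _ => ?_
      rw [smul_mul_assoc, mul_smul_comm, smul_smul]
    have hS3 : (∑ j ∈ Finset.range (N + 3),
        m ^ j • (if j = 0 then (0 : R) else
          N.choose (j - 1) • (γ * (x ^ (N + 1 - j) * Ω 1)))) = m • (γ * (T ^ N * Ω 1)) := by
      rw [Finset.sum_range_succ']
      simp only [eq_self_iff_true, if_true, ite_true, smul_zero, add_zero, Nat.sub_zero,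
        Nat.add_sub_cancel, Nat.succ_sub_succ_eq_sub, if_neg (Nat.succ_ne_zero _)]
      rw [Finset.sum_range_succ, Nat.choose_succ_self, zero_smul, smul_zero, add_zero,
        hT, sd6_add_pow, Finset.sum_mul, Finset.mul_sum, Finset.smul_sum]
      refine Finset.sum_congr rfl fun j _ => ?_
      rw [smul_mul_assoc, mul_smul_comm, smul_smul, smul_smul]
      congr 1
      ring
    calc (∑ j ∈ Finset.range (N + 3), m ^ j •
            ((N + 1).choose j • Ψ (x ^ (N + 1 - j)) -
              (N.choose j • (γ * (x ^ (N - j) * Ω x)) +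
                (if j = 0 then 0 else N.choose (j - 1) • (γ * (x ^ (N + 1 - j) * Ω 1))))))
        = (∑ j ∈ Finset.range (N + 3), m ^ j • ((N + 1).choose j • Ψ (x ^ (N + 1 - j)))) -
          ((∑ j ∈ Finset.range (N + 3), m ^ j • (N.choose j • (γ * (x ^ (N - j) * Ω x)))) +
           (∑ j ∈ Finset.range (N + 3), m ^ j • (if j = 0 then (0 : R) else
              N.choose (j - 1) • (γ * (x ^ (N + 1 - j) * Ω 1))))) := by
          rw [← Finset.sum_add_distrib, ← Finset.sum_sub_distrib]
          refine Finset.sum_congr rfl fun j _ => ?_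
          rw [smul_sub, smul_add]
      _ = Ψ (T ^ (N + 1)) - (γ * (T ^ N * Ω x) + m • (γ * (T ^ N * Ω 1))) := by
          rw [hS1, hS2, hS3]
      _ = 0 := by
          have hexp : γ * (T ^ N * (Ω x + m • Ω 1)) =
              γ * (T ^ N * Ω x) + m • (γ * (T ^ N * Ω 1)) := by
            rw [mul_add, mul_add, mul_smul_comm, mul_smul_comm]
          rw [hmain, hexp, sub_self]
  -- the two linear consequences
  have eqA : ∀ x : R, (N + 1) • Ψ x = γ * Ω x + N • (γ * (x * Ω 1)) := by
    intro x
    have h := key2 x N (by omega)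
    have e1 : N + 1 - N = 1 := by omega
    have e2 : N.choose (N - 1) = N := by
      have := Nat.choose_symm (n := N) (k := 1) hN
      simpa [Nat.choose_one_right] using this
    rw [if_neg (by omega : ¬ N = 0), e1, e2, Nat.sub_self, pow_zero, one_mul, pow_one,
      Nat.choose_self, one_smul, Nat.choose_succ_self_right] at h
    exact sub_eq_zero.mp h
  have eqB : ∀ x : R, (N + 1).choose 2 • Ψ (x ^ 2) =
      N • (γ * (x * Ω x)) + N.choose 2 • (γ * (x ^ 2 * Ω 1)) := by
    intro x
    have h := key2 x (N - 1) (by omega)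
    have e1 : N + 1 - (N - 1) = 2 := by omega
    have e2 : N - (N - 1) = 1 := by omega
    have e3 : (N + 1).choose (N - 1) = (N + 1).choose 2 := by
      rw [show N - 1 = N + 1 - 2 by omega]
      exact Nat.choose_symm (by omega)
    have e4 : N.choose (N - 1) = N := by
      have := Nat.choose_symm (n := N) (k := 1) hN
      simpa [Nat.choose_one_right] using this
    rw [e1, e2, e3, e4, pow_one] at h
    rcases Nat.lt_or_ge N 2 with hN2 | hN2
    · have hN1 : N = 1 := by omega
      subst hN1
      rw [if_pos rfl, add_zero] at h
      rw [show Nat.choose 1 2 = 0 from rfl, zero_smul, add_zero]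
      exact sub_eq_zero.mp h
    · rw [if_neg (by omega : ¬ N - 1 = 0),
        show N - 1 - 1 = N - 2 by omega,
        Nat.choose_symm (by omega : 2 ≤ N)] at h
      exact sub_eq_zero.mp h
  -- numerical identities
  obtain ⟨M, hM⟩ : ∃ M, N = M + 1 := ⟨N - 1, by omega⟩
  have hb2 : 2 * (N + 1).choose 2 = (N + 1) * N := by
    have h := Nat.add_one_mul_choose_eq N 1
    rw [Nat.choose_one_right] at h
    rw [h]; ring
  have hc2 : 2 * N.choose 2 = N * (N - 1) := by
    have h := Nat.add_one_mul_choose_eq (N - 1) 1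
    rw [Nat.choose_one_right, show N - 1 + 1 = N by omega] at h
    rw [h]; ring
  have hkey : (N + 1).choose 2 * N = (N + 1) * N.choose 2 + (N + 1).choose 2 := by
    have h2x : 2 * ((N + 1).choose 2 * N) =
        2 * ((N + 1) * N.choose 2 + (N + 1).choose 2) := by
      calc 2 * ((N + 1).choose 2 * N) = (2 * (N + 1).choose 2) * N := by ring
        _ = ((N + 1) * N) * N := by rw [hb2]
        _ = (N + 1) * (N * (N - 1)) + (N + 1) * N := by
            subst hM; simp only [Nat.add_sub_cancel]; ring
        _ = (N + 1) * (2 * N.choose 2) + 2 * (N + 1).choose 2 := by rw [hc2, hb2]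
        _ = 2 * ((N + 1) * N.choose 2 + (N + 1).choose 2) := by ring
    omega
  have hb0 : (N + 1).choose 2 ≠ 0 := (Nat.choose_pos (by omega : 2 ≤ N + 1)).ne'
  -- the Jordan identity for Ω
  have hJ : ∀ x : R, Ω (x ^ 2) = 2 • (x * Ω x) - x ^ 2 * Ω 1 := by
    intro x
    have hA := eqA (x ^ 2)
    have hB := eqB x
    set b := (N + 1).choose 2 with hbdef
    have hcomb : b • (γ * Ω (x ^ 2) + N • (γ * (x ^ 2 * Ω 1))) =
        (N + 1) • (N • (γ * (x * Ω x)) + N.choose 2 • (γ * (x ^ 2 * Ω 1))) := by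
      rw [← hA, ← hB, smul_smul, smul_smul, Nat.mul_comm]
    rw [smul_add, smul_add, smul_smul, smul_smul, smul_smul] at hcomb
    rw [← hb2] at hcomb
    rw [hkey, add_smul] at hcomb
    have E2 : b • (γ * Ω (x ^ 2)) + b • (γ * (x ^ 2 * Ω 1)) = (2 * b) • (γ * (x * Ω x)) := by
      have h' : (b • (γ * Ω (x ^ 2)) + b • (γ * (x ^ 2 * Ω 1))) +
          ((N + 1) * N.choose 2) • (γ * (x ^ 2 * Ω 1)) =
          (2 * b) • (γ * (x * Ω x)) + ((N + 1) * N.choose 2) • (γ * (x ^ 2 * Ω 1)) := by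
        rw [← hcomb]; abel
      exact add_right_cancel h'
    have G : b • (γ * Ω (x ^ 2)) = b • (γ * (2 • (x * Ω x) - x ^ 2 * Ω 1)) := by
      rw [mul_sub, mul_smul_comm, smul_sub, smul_smul, Nat.mul_comm b 2]
      exact eq_sub_of_add_eq E2
    exact hγu.mul_left_cancel (sd6_nsmul_cancel 𝕜 hb0 G)
  -- conclusion
  refine ⟨comm1, fun hc => ⟨fun x => ?_, fun x => ?_⟩⟩
  · have e : x * Ω 1 * x = x ^ 2 * Ω 1 := by
      rw [mul_assoc, hc x, ← mul_assoc, ← sq]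
    rw [hJ x, sub_mul, mul_sub, comm1 x, hc x, hc (x ^ 2), e,
      show x * (x * Ω 1) = x ^ 2 * Ω 1 by rw [← mul_assoc, ← sq]]
    abel
  · rw [sub_mul, mul_sub, comm1 x, hc x,
      show x * Ω 1 * x = x * (x * Ω 1) by rw [mul_assoc, hc x]]
end

section
/- Let R be a unital algebra over a field of characteristic zero, n > 1 an integer, γ a central invertible element, and Ψ, Ω : R → R additive maps satisfying Ψ(X^n) = γ·X·Ω(X^{n−1}) = γ·Ω(X^{n−1})·X for all X ∈ R. Then, setting μ = nΨ − (n−2)γΩ, one has μ(X²) = 2γ·X·Ω(X) = 2γ·Ω(X)·X for all X ∈ R. -/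
open Finset

lemma aux_vandermonde {𝕜 R : Type*} [Field 𝕜] [CharZero 𝕜] [AddCommGroup R] [Module 𝕜 R]
    {d : ℕ} (v : ℕ → R)
    (h : ∀ k : ℕ, ∑ i ∈ range (d+1), k ^ i • v i = 0) :
    ∀ i ≤ d, v i = 0 := by
  set M : Matrix (Fin (d+1)) (Fin (d+1)) 𝕜 := Matrix.vandermonde (fun i => ((i : ℕ) : 𝕜)) with hM
  have hdet : IsUnit M.det := by
    rw [isUnit_iff_ne_zero, hM, Matrix.det_vandermonde_ne_zero_iff]
    intro a b hab
    exact Fin.ext (Nat.cast_injective hab)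
  have hinv := Matrix.nonsing_inv_mul M hdet
  have h' : ∀ k : Fin (d+1), ∑ j : Fin (d+1), M k j • v (j : ℕ) = 0 := by
    intro k
    have hh := h (k : ℕ)
    rw [← Fin.sum_univ_eq_sum_range (fun i => ((k:ℕ)) ^ i • v i) (d+1)] at hh
    rw [← hh]
    refine Finset.sum_congr rfl fun j _ => ?_
    rw [hM, Matrix.vandermonde_apply, ← Nat.cast_pow, Nat.cast_smul_eq_nsmul]
  intro i hi
  have hvi : ∀ j : Fin (d+1), v (j : ℕ) = 0 := by
    intro j
    have e1 : v (j : ℕ) = ∑ l : Fin (d+1), (M⁻¹ * M) j l • v (l : ℕ) := by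
      rw [hinv]
      simp [Matrix.one_apply]
    rw [e1]
    have e2 : ∀ l : Fin (d+1), (M⁻¹ * M) j l • v (l : ℕ)
        = ∑ kk : Fin (d+1), M⁻¹ j kk • (M kk l • v (l : ℕ)) := by
      intro l
      rw [Matrix.mul_apply, Finset.sum_smul]
      exact Finset.sum_congr rfl fun kk _ => mul_smul _ _ _
    rw [Finset.sum_congr rfl fun l _ => e2 l, Finset.sum_comm]
    simp [← Finset.smul_sum, h']
  exact hvi ⟨i, by omega⟩

lemma aux_expand {R : Type*} [Ring R] (x : R) (k m : ℕ) :
    (x + k • (1:R)) ^ m = ∑ j ∈ range (m+1), (k ^ (m-j) * m.choose j) • x ^ j := by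
  have h1 : (k • (1:R)) = (k : R) := by simp
  have hc : Commute x (k • (1:R)) := by rw [h1]; exact (Nat.cast_commute k x).symm
  rw [hc.add_pow]
  refine Finset.sum_congr rfl fun j _ => ?_
  rw [h1, mul_assoc, ← Nat.cast_pow, ← Nat.cast_mul,
    ← (Nat.cast_commute (k ^ (m-j) * m.choose j) (x ^ j)).eq, ← nsmul_eq_mul]

lemma aux_choose_two (m : ℕ) : 2 * m.choose 2 = m * (m - 1) := by
  induction m with
  | zero => rfl
  | succ p ih =>
    rw [Nat.choose_succ_succ, Nat.mul_add, ih, Nat.choose_one_right]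
    rcases p with _ | q
    · rfl
    · simp only [Nat.succ_sub_one]
      ring

lemma aux_key {𝕜 R : Type*} [Field 𝕜] [CharZero 𝕜] [Ring R] [Algebra 𝕜 R]
    (n : ℕ) (hn : 1 < n)
    (Ψ Ω D : R → R) (B : R → R → R)
    (hΨadd : ∀ x y, Ψ (x + y) = Ψ x + Ψ y)
    (hΩadd : ∀ x y, Ω (x + y) = Ω x + Ω y)
    (hDadd : ∀ x y, D (x + y) = D x + D y)
    (hBadd : ∀ x s t, B x (s + t) = B x s + B x t)
    (hBx : ∀ x (k : ℕ) s, B (x + k • (1:R)) s = B x s + k • D s)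
    (hid : ∀ x, Ψ (x ^ n) = B x (Ω (x ^ (n-1))))
    (x : R) :
    n • Ψ (x^2) - (n-2) • D (Ω (x^2)) = 2 • B x (Ω x) := by
  have hen : n - 1 + 1 = n := by omega
  have Ψsum : ∀ (m : ℕ) (f : ℕ → R), Ψ (∑ j ∈ range m, f j) = ∑ j ∈ range m, Ψ (f j) :=
    fun m f => map_sum (AddMonoidHom.mk' Ψ hΨadd) f (range m)
  have Ψns : ∀ (c : ℕ) (y : R), Ψ (c • y) = c • Ψ y :=
    fun c y => AddMonoidHom.map_nsmul (AddMonoidHom.mk' Ψ hΨadd) c y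
  have Ωsum : ∀ (m : ℕ) (f : ℕ → R), Ω (∑ j ∈ range m, f j) = ∑ j ∈ range m, Ω (f j) :=
    fun m f => map_sum (AddMonoidHom.mk' Ω hΩadd) f (range m)
  have Ωns : ∀ (c : ℕ) (y : R), Ω (c • y) = c • Ω y :=
    fun c y => AddMonoidHom.map_nsmul (AddMonoidHom.mk' Ω hΩadd) c y
  have Dsum : ∀ (m : ℕ) (f : ℕ → R), D (∑ j ∈ range m, f j) = ∑ j ∈ range m, D (f j) :=
    fun m f => map_sum (AddMonoidHom.mk' D hDadd) f (range m)
  have Dns : ∀ (c : ℕ) (y : R), D (c • y) = c • D y :=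
    fun c y => AddMonoidHom.map_nsmul (AddMonoidHom.mk' D hDadd) c y
  have Bsum : ∀ (m : ℕ) (f : ℕ → R), B x (∑ j ∈ range m, f j) = ∑ j ∈ range m, B x (f j) :=
    fun m f => map_sum (AddMonoidHom.mk' (B x) (hBadd x)) f (range m)
  have Bns : ∀ (c : ℕ) (y : R), B x (c • y) = c • B x y :=
    fun c y => AddMonoidHom.map_nsmul (AddMonoidHom.mk' (B x) (hBadd x)) c y
  set v : ℕ → R := fun i =>
    (n.choose (n-i)) • Ψ (x ^ (n-i))
      - (if i < n then ((n-1).choose (n-1-i)) • B x (Ω (x ^ (n-1-i))) else 0)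
      - ((n-1).choose (n-i)) • D (Ω (x ^ (n-i))) with hv
  have key : ∀ k : ℕ, ∑ i ∈ range (n+1), k ^ i • v i = 0 := by
    intro k
    have ha : Ψ ((x + k • (1:R)) ^ n)
        = ∑ i ∈ range (n+1), k ^ i • ((n.choose (n-i)) • Ψ (x ^ (n-i))) := by
      rw [aux_expand, Ψsum,
        ← Finset.sum_range_reflect (fun i => k ^ i • ((n.choose (n-i)) • Ψ (x ^ (n-i)))) (n+1)]
      refine Finset.sum_congr rfl fun j hj => ?_
      rw [mem_range] at hj
      have e1 : n + 1 - 1 - j = n - j := by omega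
      have e2 : n - (n - j) = j := by omega
      rw [e1, e2, Ψns, mul_smul]
    have hexp : Ω ((x + k • (1:R)) ^ (n-1))
        = ∑ j ∈ range n, (k ^ (n-1-j) * (n-1).choose j) • Ω (x ^ j) := by
      rw [aux_expand, hen, Ωsum]
      exact Finset.sum_congr rfl fun j _ => Ωns _ _
    have hb : B x (Ω ((x + k • (1:R)) ^ (n-1)))
        = ∑ i ∈ range (n+1),
            k ^ i • (if i < n then ((n-1).choose (n-1-i)) • B x (Ω (x ^ (n-1-i))) else 0) := by
      rw [Finset.sum_range_succ, if_neg (lt_irrefl n), smul_zero, add_zero,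
        Finset.sum_congr rfl (fun i hi => by rw [if_pos (mem_range.mp hi)]),
        hexp, Bsum,
        ← Finset.sum_range_reflect
          (fun i => k ^ i • (((n-1).choose (n-1-i)) • B x (Ω (x ^ (n-1-i))))) n]
      refine Finset.sum_congr rfl fun j hj => ?_
      rw [mem_range] at hj
      have e1 : n - 1 - j = n - 1 - j := rfl
      have e2 : n - 1 - (n - 1 - j) = j := by omega
      rw [e2, Bns, mul_smul]
    have hcc : k • D (Ω ((x + k • (1:R)) ^ (n-1)))
        = ∑ i ∈ range (n+1), k ^ i • (((n-1).choose (n-i)) • D (Ω (x ^ (n-i)))) := by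
      rw [Finset.sum_range_succ']
      have h0 : (k:ℕ) ^ 0 • (((n-1).choose (n-0)) • D (Ω (x ^ (n-0)))) = 0 := by
        rw [Nat.choose_eq_zero_of_lt (by omega), zero_smul, smul_zero]
      rw [h0, add_zero, hexp, Dsum]
      rw [Finset.sum_congr rfl (fun j _ => by rw [Dns])]
      rw [← Finset.sum_range_reflect
        (fun j => (k ^ (n-1-j) * (n-1).choose j) • D (Ω (x ^ j))) n, Finset.smul_sum]
      refine Finset.sum_congr rfl fun j hj => ?_
      rw [mem_range] at hj
      have e2 : n - 1 - (n - 1 - j) = j := by omega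
      have e3 : n - (j + 1) = n - 1 - j := by omega
      rw [e2, e3, smul_smul, mul_smul, mul_smul]
      rw [pow_succ, mul_comm (k ^ j) k, mul_smul]
    have hΨid := hid (x + k • (1:R))
    rw [hBx x k] at hΨid
    simp only [hv, smul_sub, Finset.sum_sub_distrib]
    rw [← ha, ← hb, ← hcc, hΨid]
    abel
  have hv0 := aux_vandermonde (𝕜 := 𝕜) v key (n-2) (by omega)
  have e1 : n - (n-2) = 2 := by omega
  have e2 : n - 1 - (n-2) = 1 := by omega
  simp only [hv, e1, e2, if_pos (show n - 2 < n by omega), pow_one] at hv0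
  have hcancel : ∀ (m : ℕ), m ≠ 0 → ∀ r : R, m • r = 0 → r = 0 := by
    intro m hm r hr
    have h1 : ((m:𝕜)) • r = 0 := by rw [Nat.cast_smul_eq_nsmul]; exact hr
    have hm' : (m:𝕜) ≠ 0 := Nat.cast_ne_zero.mpr hm
    calc r = (m:𝕜)⁻¹ • ((m:𝕜) • r) := (inv_smul_smul₀ hm' r).symm
    _ = 0 := by rw [h1, smul_zero]
  have hc1 : (n-1) * n = 2 * n.choose 2 := by rw [aux_choose_two]; ring
  have hc2 : (n-1) * (n-2) = 2 * (n-1).choose 2 := by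
    have e : n - 1 - 1 = n - 2 := by omega
    rw [aux_choose_two, e]
  have hc3 : (n-1) * 2 = 2 * (n-1).choose 1 := by rw [Nat.choose_one_right]; ring
  have hm : (n-1) • (n • Ψ (x^2) - (n-2) • D (Ω (x^2)) - 2 • B x (Ω x)) = 0 := by
    have h2' := congrArg (fun y => (2:ℕ) • y) hv0
    simp only [smul_sub, smul_smul, smul_zero] at h2'
    simp only [smul_sub, smul_smul, hc1, hc2, hc3]
    rw [sub_right_comm] at h2'
    exact h2'
  have hfin := hcancel (n-1) (by omega) _ hm
  rwa [sub_eq_zero] at hfin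


/-- The reduction step of Corollary 2.2: from
`Ψ(X^n) = γXΩ(X^{n-1}) = γΩ(X^{n-1})X` on a unital algebra over a field of
characteristic zero (with `γ` central invertible), the map `μ = nΨ − (n−2)γΩ`
satisfies `μ(X²) = 2γXΩ(X) = 2γΩ(X)X`. -/
theorem stmt_18 {𝕜 R : Type*} [Field 𝕜] [CharZero 𝕜] [Ring R] [Algebra 𝕜 R]
    (n : ℕ) (hn : 1 < n)
    (γ : R) (hγc : ∀ y : R, γ * y = y * γ) (hγu : IsUnit γ)
    (Ψ Ω : R → R)
    (hΨadd : ∀ x y, Ψ (x + y) = Ψ x + Ψ y)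
    (hΩadd : ∀ x y, Ω (x + y) = Ω x + Ω y)
    (h1 : ∀ x, Ψ (x ^ n) = γ * (x * Ω (x ^ (n - 1))))
    (h2 : ∀ x, γ * (x * Ω (x ^ (n - 1))) = γ * (Ω (x ^ (n - 1)) * x)) :
    ∀ x : R, (n • Ψ (x ^ 2) - (n - 2) • (γ * Ω (x ^ 2))) = 2 • (γ * (x * Ω x)) ∧
      (n • Ψ (x ^ 2) - (n - 2) • (γ * Ω (x ^ 2))) = 2 • (γ * (Ω x * x)) := by
  intro x
  constructor
  · exact aux_key (𝕜 := 𝕜) n hn Ψ Ω (fun s => γ * s) (fun y s => γ * (y * s))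
      hΨadd hΩadd (fun a b => by simp only [mul_add])
      (fun y s t => by simp only [mul_add])
      (fun y k s => by
        simp only [add_mul, smul_mul_assoc, one_mul, mul_add, mul_smul_comm])
      h1 x
  · exact aux_key (𝕜 := 𝕜) n hn Ψ Ω (fun s => γ * s) (fun y s => γ * (s * y))
      hΨadd hΩadd (fun a b => by simp only [mul_add])
      (fun y s t => by simp only [add_mul, mul_add])
      (fun y k s => by
        simp only [mul_add, mul_smul_comm, smul_mul_assoc, mul_one])
      (fun y => (h1 y).trans (h2 y)) x
end
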